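/- Let k be a field with absolute Galois group π₁(k), ℓ a prime invertible in k, and T, U two finitely generated free ℤ_ℓ-modules with continuous π₁(k)-actions. Suppose there exists a finite extension k ⊆ k_ℓ and a π₁(k_ℓ)-equivariant isomorphism T ≅ U, and suppose that the Zariski closure of the image of π₁(k) acting on H ⊗ ℚ_ℓ is connected, where H = T^∨ ⊗ U. Then there exists a π₁(k)-equivariant isomorphism T ≅ U. -/

import Mathlib

noncomputable section
open Matrix

/-- The Zariski topology on the space of square matrices over `K`: the topology generated by
the basic open sets `{M | p(M) ≠ 0}` for polynomials `p` in the matrix entries. -/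
def zariskiMat (n : Type*) [Fintype n] (K : Type*) [CommRing K] :
    TopologicalSpace (Matrix n n K) :=
  TopologicalSpace.generateFrom
    {U | ∃ p : MvPolynomial (n × n) K,
      U = {M : Matrix n n K | MvPolynomial.eval (fun q => M q.1 q.2) p ≠ 0}}

/-- The Zariski topology on the algebraic group `GL_n(K)`, induced by the closed embedding
`g ↦ (g, g⁻¹)` into matrix pairs. -/
def zariskiGL (n : Type*) [Fintype n] [DecidableEq n] (K : Type*) [CommRing K] :
    TopologicalSpace (GL n K) :=
  TopologicalSpace.induced
    (fun g => (((g : GL n K) : Matrix n n K), ((g⁻¹ : GL n K) : Matrix n n K)))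
    (@instTopologicalSpaceProd _ _ (zariskiMat n K) (zariskiMat n K))

variable {n : Type*} [Fintype n] [DecidableEq n] {K : Type*} [CommRing K]

/-- Zariski closure in `GL_n(K)`. -/
def zClosure (S : Set (GL n K)) : Set (GL n K) := @closure _ (zariskiGL n K) S

/-- Zariski connectedness in `GL_n(K)`. -/
def zIsConnected (S : Set (GL n K)) : Prop := @IsConnected _ (zariskiGL n K) S

/-- Zariski closedness in `GL_n(K)`. -/
def zIsClosed (S : Set (GL n K)) : Prop := @IsClosed _ (zariskiGL n K) S

/-- The connected component of `g` inside `S ⊆ GL_n(K)`, for the Zariski topology; for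
`g = 1` and `S = G` an algebraic subgroup this is the neutral component `G⁰`. -/
def zComponentIn (S : Set (GL n K)) (g : GL n K) : Set (GL n K) :=
  @connectedComponentIn _ (zariskiGL n K) S g

/-- The set `π₀` of connected components of a subset of `GL_n(K)` in the Zariski topology. -/
def zPi0 (S : Set (GL n K)) : Type _ :=
  @ConnectedComponents S (TopologicalSpace.induced Subtype.val (zariskiGL n K))

open Kronecker

/-- The element of `GL_{r²}(K)` giving the conjugation action `A ↦ P A Q⁻¹` on `r × r`
matrices (`Hom(T, U) = T^∨ ⊗ U`), namely `P ⊗ (Q⁻¹)ᵀ`. -/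
def conjGL {K : Type*} [CommRing K] {r : ℕ} (P Q : GL (Fin r) K) :
    GL (Fin r × Fin r) K where
  val := ((P : Matrix (Fin r) (Fin r) K)) ⊗ₖ (((Q⁻¹ : GL (Fin r) K) : Matrix (Fin r) (Fin r) K))ᵀ
  inv := (((P⁻¹ : GL (Fin r) K) : Matrix (Fin r) (Fin r) K)) ⊗ₖ ((Q : Matrix (Fin r) (Fin r) K))ᵀ
  val_inv := by
    rw [← Matrix.mul_kronecker_mul, ← Matrix.transpose_mul]
    simp
  inv_val := by
    rw [← Matrix.mul_kronecker_mul, ← Matrix.transpose_mul]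
    simp

/-- The inclusion `GL_r(ℤ_ℓ) → GL_r(ℚ_ℓ)`. -/
def glPadicIncl (ℓ r : ℕ) [Fact ℓ.Prime] : GL (Fin r) ℤ_[ℓ] →* GL (Fin r) ℚ_[ℓ] :=
  Units.map (((PadicInt.Coe.ringHom (p := ℓ)).mapMatrix :
    Matrix (Fin r) (Fin r) ℤ_[ℓ] →+* Matrix (Fin r) (Fin r) ℚ_[ℓ])).toMonoidHom

section ZariskiAux

open MvPolynomial TopologicalSpace Topology

lemma zMat_isOpen_basic (p : MvPolynomial (n × n) K) :
    IsOpen[zariskiMat n K] {M : Matrix n n K | MvPolynomial.eval (fun q => M q.1 q.2) p ≠ 0} :=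
  isOpen_generateFrom_of_mem ⟨p, rfl⟩

lemma zMat_isClosed_zero (p : MvPolynomial (n × n) K) :
    IsClosed[zariskiMat n K] {M : Matrix n n K | MvPolynomial.eval (fun q => M q.1 q.2) p = 0} := by
  letI := zariskiMat n K
  have h : {M : Matrix n n K | MvPolynomial.eval (fun q => M q.1 q.2) p = 0} =
      {M : Matrix n n K | MvPolynomial.eval (fun q => M q.1 q.2) p ≠ 0}ᶜ := by
    ext M; simp
  rw [h]
  exact (zMat_isOpen_basic p).isClosed_compl

lemma zMat_eval_bind₁ {σ τ : Type*} (g : τ → K) (h : σ → MvPolynomial τ K)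
    (φ : MvPolynomial σ K) :
    MvPolynomial.eval g (bind₁ h φ) = MvPolynomial.eval (fun i => MvPolynomial.eval g (h i)) φ :=
  eval₂Hom_bind₁ (RingHom.id K) g h φ

lemma zMat_continuous {m : Type*} [Fintype m]
    (f : Matrix n n K → Matrix m m K) (P : m × m → MvPolynomial (n × n) K)
    (hf : ∀ M p, f M p.1 p.2 = MvPolynomial.eval (fun q => M q.1 q.2) (P p)) :
    Continuous[zariskiMat n K, zariskiMat m K] f := by
  unfold zariskiMat
  rw [continuous_generateFrom_iff]
  rintro s ⟨p, rfl⟩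
  have h : f ⁻¹' {M | MvPolynomial.eval (fun q => M q.1 q.2) p ≠ 0} =
      {M : Matrix n n K | MvPolynomial.eval (fun q => M q.1 q.2) (bind₁ P p) ≠ 0} := by
    ext M
    have h1 : (fun q : m × m => f M q.1 q.2) =
        fun q => MvPolynomial.eval (fun q' : n × n => M q'.1 q'.2) (P q) := by
      funext q; exact hf M q
    simp only [Set.mem_preimage, Set.mem_setOf_eq, h1, zMat_eval_bind₁]
  rw [h]
  exact zMat_isOpen_basic _

lemma zMat_continuous_mulLeft (a : Matrix n n K) :
    Continuous[zariskiMat n K, zariskiMat n K] (fun M => a * M) := by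
  refine zMat_continuous _ (fun p => ∑ x : n, MvPolynomial.C (a p.1 x) * MvPolynomial.X (x, p.2))
    fun M p => ?_
  simp [Matrix.mul_apply]

lemma zMat_continuous_mulRight (b : Matrix n n K) :
    Continuous[zariskiMat n K, zariskiMat n K] (fun M => M * b) := by
  refine zMat_continuous _ (fun p => ∑ x : n, MvPolynomial.C (b x p.2) * MvPolynomial.X (p.1, x))
    fun M p => ?_
  simp [Matrix.mul_apply, mul_comm]

lemma zGL_continuous_val :
    Continuous[zariskiGL n K, zariskiMat n K] (fun g : GL n K => (g : Matrix n n K)) := by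
  letI tm : TopologicalSpace (Matrix n n K) := zariskiMat n K
  letI tg : TopologicalSpace (GL n K) := zariskiGL n K
  exact Continuous.comp (g := Prod.fst)
    (f := fun g : GL n K => (((g : GL n K) : Matrix n n K), ((g⁻¹ : GL n K) : Matrix n n K)))
    continuous_fst continuous_induced_dom

lemma zGL_continuous_invVal :
    Continuous[zariskiGL n K, zariskiMat n K]
      (fun g : GL n K => ((g⁻¹ : GL n K) : Matrix n n K)) := by
  letI tm : TopologicalSpace (Matrix n n K) := zariskiMat n K
  letI tg : TopologicalSpace (GL n K) := zariskiGL n K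
  exact Continuous.comp (g := Prod.snd)
    (f := fun g : GL n K => (((g : GL n K) : Matrix n n K), ((g⁻¹ : GL n K) : Matrix n n K)))
    continuous_snd continuous_induced_dom

lemma zGL_continuous_of (f : GL n K → GL n K)
    (h1 : Continuous[zariskiGL n K, zariskiMat n K]
      (fun g : GL n K => ((f g : GL n K) : Matrix n n K)))
    (h2 : Continuous[zariskiGL n K, zariskiMat n K]
      (fun g : GL n K => (((f g)⁻¹ : GL n K) : Matrix n n K))) :
    Continuous[zariskiGL n K, zariskiGL n K] f := by
  letI tm : TopologicalSpace (Matrix n n K) := zariskiMat n K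
  letI tg : TopologicalSpace (GL n K) := zariskiGL n K
  exact continuous_induced_rng.2 (Continuous.prodMk h1 h2)

lemma zGL_continuous_mulLeft (a : GL n K) :
    Continuous[zariskiGL n K, zariskiGL n K] (fun g : GL n K => a * g) := by
  letI tm : TopologicalSpace (Matrix n n K) := zariskiMat n K
  letI tg : TopologicalSpace (GL n K) := zariskiGL n K
  refine zGL_continuous_of _ ?_ ?_
  · have : (fun g : GL n K => ((a * g : GL n K) : Matrix n n K)) =
        (fun M : Matrix n n K => (a : Matrix n n K) * M) ∘
          (fun g : GL n K => (g : Matrix n n K)) := rfl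
    rw [this]
    exact Continuous.comp (zMat_continuous_mulLeft _) zGL_continuous_val
  · have : (fun g : GL n K => (((a * g)⁻¹ : GL n K) : Matrix n n K)) =
        (fun M : Matrix n n K => M * ((a⁻¹ : GL n K) : Matrix n n K)) ∘
          (fun g : GL n K => ((g⁻¹ : GL n K) : Matrix n n K)) := by
      funext g; simp [_root_.mul_inv_rev]
    rw [this]
    exact Continuous.comp (zMat_continuous_mulRight _) zGL_continuous_invVal

lemma zGL_continuous_mulRight (a : GL n K) :
    Continuous[zariskiGL n K, zariskiGL n K] (fun g : GL n K => g * a) := by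
  letI tm : TopologicalSpace (Matrix n n K) := zariskiMat n K
  letI tg : TopologicalSpace (GL n K) := zariskiGL n K
  refine zGL_continuous_of _ ?_ ?_
  · have : (fun g : GL n K => ((g * a : GL n K) : Matrix n n K)) =
        (fun M : Matrix n n K => M * (a : Matrix n n K)) ∘
          (fun g : GL n K => (g : Matrix n n K)) := rfl
    rw [this]
    exact Continuous.comp (zMat_continuous_mulRight _) zGL_continuous_val
  · have : (fun g : GL n K => (((g * a)⁻¹ : GL n K) : Matrix n n K)) =
        (fun M : Matrix n n K => ((a⁻¹ : GL n K) : Matrix n n K) * M) ∘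
          (fun g : GL n K => ((g⁻¹ : GL n K) : Matrix n n K)) := by
      funext g; simp [_root_.mul_inv_rev]
    rw [this]
    exact Continuous.comp (zMat_continuous_mulLeft _) zGL_continuous_invVal

lemma zGL_continuous_inv :
    Continuous[zariskiGL n K, zariskiGL n K] (fun g : GL n K => g⁻¹) := by
  letI tm : TopologicalSpace (Matrix n n K) := zariskiMat n K
  letI tg : TopologicalSpace (GL n K) := zariskiGL n K
  refine zGL_continuous_of _ ?_ ?_
  · exact zGL_continuous_invVal
  · have : (fun g : GL n K => (((g⁻¹)⁻¹ : GL n K) : Matrix n n K)) =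
        (fun g : GL n K => (g : Matrix n n K)) := by
      funext g; simp
    rw [this]
    exact zGL_continuous_val

/-- The stabilizer of a vector is Zariski closed in the matrix space. -/
lemma zMat_stab_closed (v : n → K) :
    IsClosed[zariskiMat n K] {M : Matrix n n K | M *ᵥ v = v} := by
  letI := zariskiMat n K
  have h : {M : Matrix n n K | M *ᵥ v = v} = ⋂ i : n, {M : Matrix n n K |
      MvPolynomial.eval (fun q : n × n => M q.1 q.2)
        ((∑ a : n, MvPolynomial.X (i, a) * MvPolynomial.C (v a)) - MvPolynomial.C (v i)) = 0} := by
    ext M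
    simp only [Set.mem_setOf_eq, Set.mem_iInter, map_sub, map_sum, _root_.map_mul, eval_X, eval_C,
      _root_.funext_iff, sub_eq_zero]
    exact forall_congr' fun i => by simp [Matrix.mulVec, dotProduct]
  rw [h]
  exact isClosed_iInter fun i => zMat_isClosed_zero _

lemma zGL_stab_closed (v : n → K) :
    zIsClosed {x : GL n K | (x : Matrix n n K) *ᵥ v = v} := by
  letI tm := zariskiMat n K
  letI tg : TopologicalSpace (GL n K) := zariskiGL n K
  have h : {x : GL n K | (x : Matrix n n K) *ᵥ v = v} =
      (fun g : GL n K => (g : Matrix n n K)) ⁻¹' {M : Matrix n n K | M *ᵥ v = v} := rfl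
  show IsClosed _
  rw [h]
  exact IsClosed.preimage zGL_continuous_val (zMat_stab_closed v)

end ZariskiAux

section ClosureAux
open Topology

lemma zD_inv {S : Set (GL n K)} (hS : ∀ x ∈ S, x⁻¹ ∈ S) :
    ∀ d ∈ zClosure S, d⁻¹ ∈ zClosure S := by
  letI tg : TopologicalSpace (GL n K) := zariskiGL n K
  intro d hd
  have h : zClosure S ⊆ (fun g : GL n K => g⁻¹) ⁻¹' zClosure S :=
    closure_minimal (fun x hx => subset_closure (hS x hx))
      (IsClosed.preimage zGL_continuous_inv isClosed_closure)
  exact h hd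

lemma zD_mul {S : Set (GL n K)} (hS : ∀ x ∈ S, ∀ y ∈ S, x * y ∈ S) :
    ∀ d ∈ zClosure S, ∀ e ∈ zClosure S, d * e ∈ zClosure S := by
  letI tg : TopologicalSpace (GL n K) := zariskiGL n K
  have step1 : ∀ x ∈ S, ∀ e ∈ zClosure S, x * e ∈ zClosure S := by
    intro x hx
    have h : zClosure S ⊆ (fun g : GL n K => x * g) ⁻¹' zClosure S :=
      closure_minimal (fun y hy => subset_closure (hS x hx y hy))
        (IsClosed.preimage (zGL_continuous_mulLeft x) isClosed_closure)
    exact fun e he => h he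
  intro d hd e he
  have h : zClosure S ⊆ (fun g : GL n K => g * e) ⁻¹' zClosure S :=
    closure_minimal (fun x hx => step1 x hx e he)
      (IsClosed.preimage (zGL_continuous_mulRight e) isClosed_closure)
  exact h hd

end ClosureAux

section ConjAux

open Kronecker

variable {r : ℕ}

lemma conjGL_mul (P₁ P₂ Q₁ Q₂ : GL (Fin r) K) :
    conjGL (P₁ * P₂) (Q₁ * Q₂) = conjGL P₁ Q₁ * conjGL P₂ Q₂ := by
  refine Units.ext ?_
  show ((P₁ * P₂ : GL (Fin r) K) : Matrix (Fin r) (Fin r) K) ⊗ₖ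
      ((((Q₁ * Q₂)⁻¹ : GL (Fin r) K) : Matrix (Fin r) (Fin r) K))ᵀ = _
  rw [_root_.mul_inv_rev]
  show (((P₁ : GL (Fin r) K) : Matrix (Fin r) (Fin r) K) *
      ((P₂ : GL (Fin r) K) : Matrix (Fin r) (Fin r) K)) ⊗ₖ
      ((((Q₂⁻¹ : GL (Fin r) K) : Matrix (Fin r) (Fin r) K) *
        ((Q₁⁻¹ : GL (Fin r) K) : Matrix (Fin r) (Fin r) K)))ᵀ = _
  rw [Matrix.transpose_mul, Matrix.mul_kronecker_mul]
  rfl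

lemma conjGL_one : conjGL (1 : GL (Fin r) K) 1 = 1 := by
  refine Units.ext ?_
  show ((1 : GL (Fin r) K) : Matrix (Fin r) (Fin r) K) ⊗ₖ
      (((1⁻¹ : GL (Fin r) K) : Matrix (Fin r) (Fin r) K))ᵀ = 1
  simp

lemma conjGL_mulVec (P Q : GL (Fin r) K) (X : Matrix (Fin r) (Fin r) K) :
    (conjGL P Q : Matrix (Fin r × Fin r) (Fin r × Fin r) K) *ᵥ (fun pq => X pq.1 pq.2) =
      fun pq => ((P : Matrix (Fin r) (Fin r) K) * X *
        ((Q⁻¹ : GL (Fin r) K) : Matrix (Fin r) (Fin r) K)) pq.1 pq.2 := by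
  funext pq
  obtain ⟨i, j⟩ := pq
  show ∑ ab : Fin r × Fin r, ((P : Matrix (Fin r) (Fin r) K) i ab.1 *
      (((Q⁻¹ : GL (Fin r) K) : Matrix (Fin r) (Fin r) K))ᵀ j ab.2) * X ab.1 ab.2 = _
  rw [Fintype.sum_prod_type, Matrix.mul_apply]
  rw [Finset.sum_comm]
  refine Finset.sum_congr rfl fun b _ => ?_
  rw [Matrix.mul_apply, Finset.sum_mul]
  refine Finset.sum_congr rfl fun a _ => ?_
  simp [Matrix.transpose_apply]
  ring

end ConjAux

/-- Let `k` be a field with absolute Galois group `π₁(k)`, `ℓ` a prime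
invertible in `k`, and `T`, `U` two finitely generated free `ℤ_ℓ`-modules (of rank `r`) with
continuous `π₁(k)`-actions `ρT`, `ρU`. Suppose there is a finite extension `k ⊆ k_ℓ` and a
`π₁(k_ℓ)`-equivariant isomorphism `T ≅ U` (an invertible matrix `ψ` intertwining the actions
on the fixing subgroup of `k_ℓ`), and suppose that the Zariski closure of the image of
`π₁(k)` acting on `H ⊗ ℚ_ℓ` is connected, where `H = T^∨ ⊗ U` (the conjugation action
`A ↦ ρU(g) A ρT(g)⁻¹`). Then there is a `π₁(k)`-equivariant isomorphism `T ≅ U`. -/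
theorem equivariant_iso_of_connected_monodromy
    (ℓ r : ℕ) [Fact ℓ.Prime] (k : Type*) [Field k] (hℓ : (ℓ : k) ≠ 0)
    (ρT ρU : Field.absoluteGaloisGroup k →* GL (Fin r) ℤ_[ℓ])
    (hTcont : Continuous ρT) (hUcont : Continuous ρU)
    (hform : ∃ E : IntermediateField k (AlgebraicClosure k), FiniteDimensional k E ∧
      ∃ ψ : GL (Fin r) ℤ_[ℓ], ∀ g : Field.absoluteGaloisGroup k,
        (g : AlgebraicClosure k ≃ₐ[k] AlgebraicClosure k) ∈ E.fixingSubgroup →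
          ρU g * ψ = ψ * ρT g)
    (hconn : zIsConnected (zClosure (Set.range fun g : Field.absoluteGaloisGroup k =>
      conjGL (glPadicIncl ℓ r (ρU g)) (glPadicIncl ℓ r (ρT g))))) :
    ∃ ψ : GL (Fin r) ℤ_[ℓ], ∀ g : Field.absoluteGaloisGroup k, ρU g * ψ = ψ * ρT g := by
  classical
  obtain ⟨E, hEfin, ψ, hψ⟩ := hform
  haveI := hEfin
  refine ⟨ψ, fun g₀ => ?_⟩
  -- notation
  set c : ℤ_[ℓ] →+* ℚ_[ℓ] := PadicInt.Coe.ringHom with hc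
  set ψq : Matrix (Fin r) (Fin r) ℚ_[ℓ] := ((ψ : Matrix (Fin r) (Fin r) ℤ_[ℓ])).map c with hψq
  set v : Fin r × Fin r → ℚ_[ℓ] := fun pq => ψq pq.1 pq.2 with hv
  set φ : Field.absoluteGaloisGroup k → GL (Fin r × Fin r) ℚ_[ℓ] :=
    fun g => conjGL (glPadicIncl ℓ r (ρU g)) (glPadicIncl ℓ r (ρT g)) with hφ
  letI tg : TopologicalSpace (GL (Fin r × Fin r) ℚ_[ℓ]) := zariskiGL _ _
  -- basic facts about φ
  have hφmul : ∀ x y : Field.absoluteGaloisGroup k, φ (x * y) = φ x * φ y := by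
    intro x y
    simp only [hφ, _root_.map_mul]
    exact conjGL_mul _ _ _ _
  have hφone : φ 1 = 1 := by
    simp only [hφ, _root_.map_one]
    exact conjGL_one
  have hφinv : ∀ x : Field.absoluteGaloisGroup k, φ x⁻¹ = (φ x)⁻¹ := by
    intro x
    refine eq_inv_of_mul_eq_one_left ?_
    rw [← hφmul, inv_mul_cancel, hφone]
  -- the subgroup N (as a set of Field.absoluteGaloisGroup k)
  set N : Set (Field.absoluteGaloisGroup k) := {σ : Field.absoluteGaloisGroup k | (σ : AlgebraicClosure k ≃ₐ[k] AlgebraicClosure k) ∈ E.fixingSubgroup} with hN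
  -- glPadicIncl values
  have hval : ∀ u : GL (Fin r) ℤ_[ℓ],
      ((glPadicIncl ℓ r u : GL (Fin r) ℚ_[ℓ]) : Matrix (Fin r) (Fin r) ℚ_[ℓ]) =
        ((u : Matrix (Fin r) (Fin r) ℤ_[ℓ])).map c := fun u => rfl
  -- the stabilizer C
  set C : Set (GL (Fin r × Fin r) ℚ_[ℓ]) :=
    {x : GL (Fin r × Fin r) ℚ_[ℓ] | (x : Matrix (Fin r × Fin r) (Fin r × Fin r) ℚ_[ℓ]) *ᵥ v = v}
    with hC
  have hCclosed : IsClosed C := zGL_stab_closed v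
  -- membership criterion in C
  have hmemC : ∀ g : Field.absoluteGaloisGroup k, φ g ∈ C ↔
      ((glPadicIncl ℓ r (ρU g) : GL (Fin r) ℚ_[ℓ]) : Matrix (Fin r) (Fin r) ℚ_[ℓ]) * ψq =
        ψq * ((glPadicIncl ℓ r (ρT g) : GL (Fin r) ℚ_[ℓ]) : Matrix (Fin r) (Fin r) ℚ_[ℓ]) := by
    intro g
    set P : GL (Fin r) ℚ_[ℓ] := glPadicIncl ℓ r (ρU g)
    set Q : GL (Fin r) ℚ_[ℓ] := glPadicIncl ℓ r (ρT g)
    have hkey : (φ g : Matrix (Fin r × Fin r) (Fin r × Fin r) ℚ_[ℓ]) *ᵥ v =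
        fun pq => ((P : Matrix (Fin r) (Fin r) ℚ_[ℓ]) * ψq *
          ((Q⁻¹ : GL (Fin r) ℚ_[ℓ]) : Matrix (Fin r) (Fin r) ℚ_[ℓ])) pq.1 pq.2 :=
      conjGL_mulVec P Q ψq
    have hQQ : ((Q : Matrix (Fin r) (Fin r) ℚ_[ℓ])) *
        ((Q⁻¹ : GL (Fin r) ℚ_[ℓ]) : Matrix (Fin r) (Fin r) ℚ_[ℓ]) = 1 := Units.mul_inv Q
    have hQQ' : (((Q⁻¹ : GL (Fin r) ℚ_[ℓ]) : Matrix (Fin r) (Fin r) ℚ_[ℓ])) *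
        ((Q : Matrix (Fin r) (Fin r) ℚ_[ℓ])) = 1 := Units.inv_mul Q
    constructor
    · intro h
      have h1 : (P : Matrix (Fin r) (Fin r) ℚ_[ℓ]) * ψq *
          ((Q⁻¹ : GL (Fin r) ℚ_[ℓ]) : Matrix (Fin r) (Fin r) ℚ_[ℓ]) = ψq := by
        ext i j
        have := congrFun (hkey.symm.trans h) (i, j)
        exact this
      calc (P : Matrix (Fin r) (Fin r) ℚ_[ℓ]) * ψq
          = (P : Matrix (Fin r) (Fin r) ℚ_[ℓ]) * ψq *
            (((Q⁻¹ : GL (Fin r) ℚ_[ℓ]) : Matrix (Fin r) (Fin r) ℚ_[ℓ]) *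
              (Q : Matrix (Fin r) (Fin r) ℚ_[ℓ])) := by rw [hQQ', mul_one]
        _ = ψq * (Q : Matrix (Fin r) (Fin r) ℚ_[ℓ]) := by
            rw [← mul_assoc, h1]
    · intro h
      have h1 : (P : Matrix (Fin r) (Fin r) ℚ_[ℓ]) * ψq *
          ((Q⁻¹ : GL (Fin r) ℚ_[ℓ]) : Matrix (Fin r) (Fin r) ℚ_[ℓ]) = ψq := by
        rw [h, mul_assoc, hQQ, mul_one]
      show (φ g : Matrix (Fin r × Fin r) (Fin r × Fin r) ℚ_[ℓ]) *ᵥ v = v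
      rw [hkey, h1]
  -- image of N lands in C
  have hNC : ∀ σ ∈ N, φ σ ∈ C := by
    intro σ hσ
    have h := hψ σ hσ
    have h' := congrArg (fun u : GL (Fin r) ℤ_[ℓ] =>
      ((u : Matrix (Fin r) (Fin r) ℤ_[ℓ])).map c) h
    simp only [Units.val_mul, Matrix.map_mul] at h'
    rw [hmemC σ, hval, hval]
    exact h'
  -- D : the closure of φ '' N
  set D : Set (GL (Fin r × Fin r) ℚ_[ℓ]) := zClosure (φ '' N) with hD
  have hDclosed : IsClosed D := isClosed_closure
  have hDC : D ⊆ C :=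
    closure_minimal (fun x ⟨σ, hσ, hx⟩ => hx ▸ hNC σ hσ) hCclosed
  -- N is a subgroup (as a set)
  have hNmul : ∀ x ∈ N, ∀ y ∈ N, x * y ∈ N := by
    intro x hx y hy
    exact E.fixingSubgroup.mul_mem hx hy
  have hNinv : ∀ x ∈ N, x⁻¹ ∈ N := by
    intro x hx
    exact E.fixingSubgroup.inv_mem hx
  have hNone : (1 : Field.absoluteGaloisGroup k) ∈ N := E.fixingSubgroup.one_mem
  -- closure properties of D
  have hφNmul : ∀ x ∈ φ '' N, ∀ y ∈ φ '' N, x * y ∈ φ '' N := by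
    rintro x ⟨a, ha, rfl⟩ y ⟨b, hb, rfl⟩
    exact ⟨a * b, hNmul a ha b hb, hφmul a b⟩
  have hφNinv : ∀ x ∈ φ '' N, x⁻¹ ∈ φ '' N := by
    rintro x ⟨a, ha, rfl⟩
    exact ⟨a⁻¹, hNinv a ha, hφinv a⟩
  have hDmul : ∀ d ∈ D, ∀ e ∈ D, d * e ∈ D := zD_mul hφNmul
  have hDinv : ∀ d ∈ D, d⁻¹ ∈ D := zD_inv hφNinv
  have h1D : (1 : GL (Fin r × Fin r) ℚ_[ℓ]) ∈ D :=
    subset_closure ⟨1, hNone, hφone⟩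
  -- the restriction map and finiteness
  set res : Field.absoluteGaloisGroup k → (E →ₐ[k] AlgebraicClosure k) := fun σ => ((σ : AlgebraicClosure k ≃ₐ[k] AlgebraicClosure k).toAlgHom).comp E.val with hres
  have hresN : ∀ x y : Field.absoluteGaloisGroup k, res x = res y → x⁻¹ * y ∈ N := by
    intro x y hxy
    let x' : AlgebraicClosure k ≃ₐ[k] AlgebraicClosure k := x
    let y' : AlgebraicClosure k ≃ₐ[k] AlgebraicClosure k := y
    let w' : AlgebraicClosure k ≃ₐ[k] AlgebraicClosure k := x⁻¹ * y
    show w' ∈ E.fixingSubgroup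
    rw [IntermediateField.mem_fixingSubgroup_iff]
    intro z hz
    have hxz : x' z = y' z := congrArg (fun f : E →ₐ[k] AlgebraicClosure k => f ⟨z, hz⟩) hxy
    exact (calc w' z = x'.symm (y' z) := rfl
      _ = x'.symm (x' z) := by rw [hxz]
      _ = z := x'.symm_apply_apply z)
  haveI : Finite (E →ₐ[k] AlgebraicClosure k) := Finite.of_fintype _
  set J := Set.range res with hJ
  have hsec : ∀ j : J, ∃ g : Field.absoluteGaloisGroup k, res g = (j : E →ₐ[k] AlgebraicClosure k) := fun j => j.2
  choose gj hgj using hsec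
  -- cosets
  set coset : J → Set (GL (Fin r × Fin r) ℚ_[ℓ]) :=
    fun j => (fun x => (φ (gj j))⁻¹ * x) ⁻¹' D with hcoset
  have hcosetClosed : ∀ j : J, IsClosed (coset j) := fun j =>
    IsClosed.preimage (zGL_continuous_mulLeft _) hDclosed
  -- G and the covering
  set G : Set (GL (Fin r × Fin r) ℚ_[ℓ]) := zClosure (Set.range φ) with hG
  have hcover : Set.range φ ⊆ ⋃ j : J, coset j := by
    rintro x ⟨g, rfl⟩
    refine Set.mem_iUnion.2 ⟨⟨res g, ⟨g, rfl⟩⟩, ?_⟩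
    show (φ (gj ⟨res g, ⟨g, rfl⟩⟩))⁻¹ * φ g ∈ D
    rw [← hφinv, ← hφmul]
    exact subset_closure ⟨_, hresN _ _ (hgj ⟨res g, ⟨g, rfl⟩⟩), rfl⟩
  have hGsub : G ⊆ ⋃ j : J, coset j :=
    closure_minimal hcover (isClosed_iUnion_of_finite hcosetClosed)
  have h1G : (1 : GL (Fin r × Fin r) ℚ_[ℓ]) ∈ G := by
    refine subset_closure ⟨1, ?_⟩
    exact hφone
  -- the "bad" part B
  set B : Set (GL (Fin r × Fin r) ℚ_[ℓ]) :=
    ⋃ j : {j : J // φ (gj j) ∉ D}, coset j.1 with hB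
  have hBclosed : IsClosed B := isClosed_iUnion_of_finite fun j => hcosetClosed j.1
  have hDB : ∀ x ∈ D, x ∉ B := by
    intro x hxD hxB
    obtain ⟨j, hj⟩ := Set.mem_iUnion.1 hxB
    have hmem : (φ (gj j.1))⁻¹ * x ∈ D := hj
    have : φ (gj j.1) ∈ D := by
      have h2 : x * ((φ (gj j.1))⁻¹ * x)⁻¹ ∈ D := hDmul x hxD _ (hDinv _ hmem)
      have h3 : x * ((φ (gj j.1))⁻¹ * x)⁻¹ = φ (gj j.1) := by group
      rwa [h3] at h2
    exact j.2 this
  have hGDB : ∀ x ∈ G, x ∈ D ∪ B := by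
    intro x hxG
    obtain ⟨j, hj⟩ := Set.mem_iUnion.1 (hGsub hxG)
    by_cases hd : φ (gj j) ∈ D
    · left
      have hmem : (φ (gj j))⁻¹ * x ∈ D := hj
      have h2 : φ (gj j) * ((φ (gj j))⁻¹ * x) ∈ D := hDmul _ hd _ hmem
      rwa [mul_inv_cancel_left] at h2
    · right
      exact Set.mem_iUnion.2 ⟨⟨j, hd⟩, hj⟩
  have h1B : (1 : GL (Fin r × Fin r) ℚ_[ℓ]) ∉ B := hDB 1 h1D
  -- connectedness forces G ⊆ D
  have hGD : G ⊆ D := by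
    intro x hxG
    by_contra hxD
    have hpre : IsPreconnected G := hconn.2
    have hne := hpre Bᶜ Dᶜ hBclosed.isOpen_compl hDclosed.isOpen_compl
      (fun y hy => by
        by_cases hyD : y ∈ D
        · exact Or.inl (hDB y hyD)
        · exact Or.inr hyD)
      ⟨1, h1G, h1B⟩ ⟨x, hxG, hxD⟩
    obtain ⟨y, hyG, hyB, hyD⟩ := hne
    rcases hGDB y hyG with h | h
    · exact hyD h
    · exact hyB h
  -- conclude
  have hgC : φ g₀ ∈ C := hDC (hGD (subset_closure ⟨g₀, rfl⟩))
  rw [hmemC g₀, hval, hval] at hgC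
  have hinj : Function.Injective (fun M : Matrix (Fin r) (Fin r) ℤ_[ℓ] => M.map c) := by
    intro M N h
    ext i j
    have h2 := congrFun (congrFun h i) j
    exact Subtype.coe_injective h2
  refine Units.ext ?_
  show ((ρU g₀ : GL (Fin r) ℤ_[ℓ]) : Matrix (Fin r) (Fin r) ℤ_[ℓ]) * ψ =
    (ψ : Matrix (Fin r) (Fin r) ℤ_[ℓ]) * ((ρT g₀ : GL (Fin r) ℤ_[ℓ]) : Matrix (Fin r) (Fin r) ℤ_[ℓ])
  apply hinj
  show (((ρU g₀ : GL (Fin r) ℤ_[ℓ]) : Matrix (Fin r) (Fin r) ℤ_[ℓ]) *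
      (ψ : Matrix (Fin r) (Fin r) ℤ_[ℓ])).map c =
    ((ψ : Matrix (Fin r) (Fin r) ℤ_[ℓ]) *
      ((ρT g₀ : GL (Fin r) ℤ_[ℓ]) : Matrix (Fin r) (Fin r) ℤ_[ℓ])).map c
  rw [Matrix.map_mul, Matrix.map_mul]
  exact hgC
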